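/- arXiv:1905.03451 — 3 statements merged into one kernel-verified Lean document; each statement's English description precedes it below -/
import Mathlib

section
/- Let G : [0, π] → ℝ be continuous and strictly decreasing. Then ∫₀^π G(t)·cos(t) dt > 0. -/
open Real intervalIntegral

theorem stmt_10 (G : ℝ → ℝ)
    (hc : ContinuousOn G (Set.Icc 0 Real.pi))
    (hmono : StrictAntiOn G (Set.Icc 0 Real.pi)) :
    0 < ∫ t in (0 : ℝ)..Real.pi, G t * Real.cos t := by
  have hpi := Real.pi_pos
  have hhalf : (0:ℝ) < Real.pi / 2 := by linarith
  -- continuity facts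
  have hG1 : ContinuousOn G (Set.Icc 0 (Real.pi/2)) :=
    hc.mono (Set.Icc_subset_Icc le_rfl (by linarith))
  have hG2 : ContinuousOn (fun t => G (Real.pi - t)) (Set.Icc 0 (Real.pi/2)) := by
    apply hc.comp (continuous_const.sub continuous_id).continuousOn
    intro x hx
    simp only [Set.mem_Icc, id_eq, Pi.sub_apply] at hx ⊢
    constructor <;> linarith [hx.1, hx.2]
  have hint1 : IntervalIntegrable (fun t => G t * Real.cos t) MeasureTheory.volume 0 (Real.pi/2) := by
    apply ContinuousOn.intervalIntegrable
    rw [Set.uIcc_of_le (by linarith)]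
    exact hG1.mul Real.continuous_cos.continuousOn
  have hint2 : IntervalIntegrable (fun t => G t * Real.cos t) MeasureTheory.volume (Real.pi/2) Real.pi := by
    apply ContinuousOn.intervalIntegrable
    rw [Set.uIcc_of_le (by linarith)]
    exact (hc.mono (Set.Icc_subset_Icc (by linarith) le_rfl)).mul Real.continuous_cos.continuousOn
  have h1 : ∫ t in (Real.pi/2)..Real.pi, G t * Real.cos t
      = ∫ t in (0:ℝ)..(Real.pi/2), G (Real.pi - t) * Real.cos (Real.pi - t) := by
    rw [intervalIntegral.integral_comp_sub_left (fun x => G x * Real.cos x) Real.pi]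
    rw [show Real.pi - Real.pi/2 = Real.pi/2 by ring, sub_zero]
  have h2 : ∀ t : ℝ, G (Real.pi - t) * Real.cos (Real.pi - t) = -(G (Real.pi - t) * Real.cos t) := by
    intro t; rw [Real.cos_pi_sub]; ring
  have key : (∫ t in (0:ℝ)..Real.pi, G t * Real.cos t)
      = ∫ t in (0:ℝ)..(Real.pi/2), (G t - G (Real.pi - t)) * Real.cos t := by
    rw [← intervalIntegral.integral_add_adjacent_intervals hint1 hint2, h1]
    simp only [h2]
    rw [intervalIntegral.integral_neg, ← sub_eq_add_neg, ← intervalIntegral.integral_sub hint1]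
    · congr 1; funext t; ring
    · apply ContinuousOn.intervalIntegrable
      rw [Set.uIcc_of_le (by linarith)]
      exact hG2.mul Real.continuous_cos.continuousOn
  rw [key]
  apply intervalIntegral.intervalIntegral_pos_of_pos_on
  · apply ContinuousOn.intervalIntegrable
    rw [Set.uIcc_of_le (by linarith)]
    exact (hG1.sub hG2).mul Real.continuous_cos.continuousOn
  · intro x hx
    obtain ⟨hx1, hx2⟩ := hx
    have hmem1 : x ∈ Set.Icc 0 Real.pi := ⟨le_of_lt hx1, by linarith⟩
    have hmem2 : Real.pi - x ∈ Set.Icc 0 Real.pi := ⟨by linarith, by linarith⟩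
    have hlt : G (Real.pi - x) < G x := hmono hmem1 hmem2 (by linarith)
    have hcos : 0 < Real.cos x := Real.cos_pos_of_mem_Ioo ⟨by linarith, hx2⟩
    have : 0 < G x - G (Real.pi - x) := by linarith
    positivity
  · exact hhalf
end

section
/- Let G : [0, π] → ℝ be continuous and strictly increasing. Then ∫₀^π G(t)·cos(t) dt < 0. -/
theorem stmt_11 (G : ℝ → ℝ)
    (hc : ContinuousOn G (Set.Icc 0 Real.pi))
    (hmono : StrictMonoOn G (Set.Icc 0 Real.pi)) :
    (∫ t in (0 : ℝ)..Real.pi, G t * Real.cos t) < 0 := by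
  have hπ := Real.pi_pos
  have hhalf : (0:ℝ) < Real.pi / 2 := by linarith
  have hsub : Set.Icc (0:ℝ) (Real.pi/2) ⊆ Set.Icc 0 Real.pi := by
    apply Set.Icc_subset_Icc le_rfl; linarith
  have hcont1 : ContinuousOn (fun t => G t * Real.cos t) (Set.Icc 0 Real.pi) :=
    hc.mul Real.continuous_cos.continuousOn
  have hcont2 : ContinuousOn (fun t => G (Real.pi - t) * Real.cos t)
      (Set.Icc (0:ℝ) (Real.pi/2)) := by
    apply ContinuousOn.mul _ Real.continuous_cos.continuousOn
    apply hc.comp (continuous_const.sub continuous_id).continuousOn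
    intro x hx
    simp only [Set.mem_Icc, id, Pi.sub_apply, id_eq] at hx ⊢
    constructor <;> [linarith [hx.2]; linarith [hx.1]]
  have hint1 : IntervalIntegrable (fun t => G t * Real.cos t) MeasureTheory.volume 0 (Real.pi/2) := by
    apply ContinuousOn.intervalIntegrable
    rw [Set.uIcc_of_le hhalf.le]
    exact hcont1.mono hsub
  have hint2 : IntervalIntegrable (fun t => G t * Real.cos t) MeasureTheory.volume (Real.pi/2) Real.pi := by
    apply ContinuousOn.intervalIntegrable
    rw [Set.uIcc_of_le (by linarith : Real.pi/2 ≤ Real.pi)]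
    exact hcont1.mono (Set.Icc_subset_Icc (by linarith) le_rfl)
  have hint3 : IntervalIntegrable (fun t => G (Real.pi - t) * Real.cos t) MeasureTheory.volume 0 (Real.pi/2) := by
    apply ContinuousOn.intervalIntegrable
    rwa [Set.uIcc_of_le hhalf.le]
  -- substitution on right half
  have hsubst : (∫ t in (Real.pi/2)..Real.pi, G t * Real.cos t)
      = - ∫ t in (0:ℝ)..(Real.pi/2), G (Real.pi - t) * Real.cos t := by
    have h1 : (∫ x in (0:ℝ)..(Real.pi/2), (fun t => G t * Real.cos t) (Real.pi - x))
        = ∫ x in (Real.pi - Real.pi/2)..(Real.pi - 0), G x * Real.cos x :=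
      intervalIntegral.integral_comp_sub_left (fun t => G t * Real.cos t) Real.pi
    have h2 : Real.pi - Real.pi/2 = Real.pi/2 := by ring
    rw [h2, sub_zero] at h1
    rw [← h1, ← intervalIntegral.integral_neg]
    congr 1
    ext x
    simp only [Real.cos_pi_sub]
    ring
  have hsplit : (∫ t in (0:ℝ)..Real.pi, G t * Real.cos t)
      = (∫ t in (0:ℝ)..(Real.pi/2), G t * Real.cos t)
        + ∫ t in (Real.pi/2)..Real.pi, G t * Real.cos t :=
    (intervalIntegral.integral_add_adjacent_intervals hint1 hint2).symm
  rw [hsplit, hsubst]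
  have hkey : (0:ℝ) < ∫ t in (0:ℝ)..(Real.pi/2), (G (Real.pi - t) - G t) * Real.cos t := by
    apply intervalIntegral.intervalIntegral_pos_of_pos_on
    · apply ContinuousOn.intervalIntegrable
      rw [Set.uIcc_of_le hhalf.le]
      exact ((hcont2.sub (hcont1.mono hsub)).congr (fun x _ => rfl)) |>.congr
        (fun x _ => by simp only [Pi.sub_apply]; ring)
    · intro x hx
      obtain ⟨hx0, hx1⟩ := hx
      have hmem1 : x ∈ Set.Icc (0:ℝ) Real.pi := ⟨hx0.le, by linarith⟩
      have hmem2 : Real.pi - x ∈ Set.Icc (0:ℝ) Real.pi := ⟨by linarith, by linarith⟩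
      have hG : G x < G (Real.pi - x) := hmono hmem1 hmem2 (by linarith)
      have hcos : 0 < Real.cos x :=
        Real.cos_pos_of_mem_Ioo ⟨by linarith, hx1⟩
      nlinarith
    · exact hhalf
  have heq : (∫ t in (0:ℝ)..(Real.pi/2), (G (Real.pi - t) - G t) * Real.cos t)
      = (∫ t in (0:ℝ)..(Real.pi/2), G (Real.pi - t) * Real.cos t)
        - ∫ t in (0:ℝ)..(Real.pi/2), G t * Real.cos t := by
    rw [← intervalIntegral.integral_sub hint3 hint1]
    congr 1; ext x; ring
  rw [heq] at hkey
  linarith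
end

section
/- Let φ, Φ : ℝ → ℝ be C³ and T-periodic, with φ'' + f(φ) = 0 and Φ'' + f'(φ(t))Φ + F₃(t) = 0, where f is C² and F₃ is C¹ and T-periodic with F₃' = F₁₃·φ' + F₂₃ for continuous T-periodic F₁₃, F₂₃. Then ∫₀^T (Φ(t)·f''(φ(t)) + F₁₃(t))·(φ'(t))² dt + ∫₀^T F₂₃(t)·φ'(t) dt = 0. -/
theorem stmt_19 (T : ℝ) (hT : 0 < T) (f φ Φ F₃ F₁₃ F₂₃ : ℝ → ℝ)
    (hf : ContDiff ℝ 2 f) (hφ : ContDiff ℝ 3 φ) (hΦ : ContDiff ℝ 3 Φ)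
    (hφper : ∀ t, φ (t + T) = φ t) (hΦper : ∀ t, Φ (t + T) = Φ t)
    (hφeq : ∀ t, deriv (deriv φ) t + f (φ t) = 0)
    (hF3 : ContDiff ℝ 1 F₃) (hF3per : ∀ t, F₃ (t + T) = F₃ t)
    (h13 : Continuous F₁₃) (h23 : Continuous F₂₃)
    (h13per : ∀ t, F₁₃ (t + T) = F₁₃ t) (h23per : ∀ t, F₂₃ (t + T) = F₂₃ t)
    (hF3' : ∀ t, deriv F₃ t = F₁₃ t * deriv φ t + F₂₃ t)
    (hΦeq : ∀ t, deriv (deriv Φ) t + deriv f (φ t) * Φ t + F₃ t = 0) :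
    (∫ t in (0 : ℝ)..T,
        (Φ t * deriv (deriv f) (φ t) + F₁₃ t) * (deriv φ t) ^ 2)
      + (∫ t in (0 : ℝ)..T, F₂₃ t * deriv φ t) = 0 := by
  -- basic regularity
  have h3 : (3 : WithTop ℕ∞) = 2 + 1 := by norm_num
  have h2 : (2 : WithTop ℕ∞) = 1 + 1 := by norm_num
  have hφd : Differentiable ℝ φ := hφ.differentiable (by norm_num)
  have hΦd : Differentiable ℝ Φ := hΦ.differentiable (by norm_num)
  have hφ1 : ContDiff ℝ 2 (deriv φ) := by
    rw [h3] at hφ; exact (contDiff_succ_iff_deriv.mp hφ).2.2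
  have hΦ1 : ContDiff ℝ 2 (deriv Φ) := by
    rw [h3] at hΦ; exact (contDiff_succ_iff_deriv.mp hΦ).2.2
  have hφ1d : Differentiable ℝ (deriv φ) := hφ1.differentiable (by norm_num)
  have hΦ1d : Differentiable ℝ (deriv Φ) := hΦ1.differentiable (by norm_num)
  have hf1 : ContDiff ℝ 1 (deriv f) := by
    rw [h2] at hf; exact (contDiff_succ_iff_deriv.mp hf).2.2
  have hfd : Differentiable ℝ f := hf.differentiable (by norm_num)
  have hf1d : Differentiable ℝ (deriv f) := hf1.differentiable (by norm_num)
  have hf2c : Continuous (deriv (deriv f)) := (contDiff_one_iff_deriv.mp hf1).2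
  have hF3d : Differentiable ℝ F₃ := hF3.differentiable (by norm_num)
  -- the second derivatives as functions
  have h2φ : deriv (deriv φ) = fun t => -f (φ t) := funext fun t => by
    have := hφeq t; linarith
  have h2Φ : deriv (deriv Φ) = fun t => -(deriv f (φ t) * Φ t + F₃ t) :=
    funext fun t => by have := hΦeq t; linarith
  -- HasDerivAt facts
  have hdφ : ∀ t, HasDerivAt φ (deriv φ t) t := fun t => (hφd t).hasDerivAt
  have hdΦ : ∀ t, HasDerivAt Φ (deriv Φ t) t := fun t => (hΦd t).hasDerivAt
  have hdφ' : ∀ t, HasDerivAt (deriv φ) (-f (φ t)) t := fun t => by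
    have := (hφ1d t).hasDerivAt; rwa [h2φ] at this
  have hdΦ' : ∀ t, HasDerivAt (deriv Φ) (-(deriv f (φ t) * Φ t + F₃ t)) t := fun t => by
    have := (hΦ1d t).hasDerivAt; rwa [h2Φ] at this
  have hdφ'' : ∀ t, HasDerivAt (deriv (deriv φ)) (-(deriv f (φ t) * deriv φ t)) t := by
    rw [h2φ]
    exact fun t => (((hfd (φ t)).hasDerivAt.comp t (hdφ t))).neg
  have hdΦ'' : ∀ t, HasDerivAt (deriv (deriv Φ))
      (-((deriv (deriv f) (φ t) * deriv φ t) * Φ t + deriv f (φ t) * deriv Φ t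
        + (F₁₃ t * deriv φ t + F₂₃ t))) t := by
    rw [h2Φ]
    intro t
    have hc : HasDerivAt (fun s => deriv f (φ s)) (deriv (deriv f) (φ t) * deriv φ t) t :=
      (hf1d (φ t)).hasDerivAt.comp t (hdφ t)
    have hF : HasDerivAt F₃ (F₁₃ t * deriv φ t + F₂₃ t) t := by
      have := (hF3d t).hasDerivAt; rwa [hF3' t] at this
    exact ((hc.mul (hdΦ t)).add hF).neg
  -- the key function
  set g : ℝ → ℝ := fun t => deriv Φ t * deriv (deriv φ) t - deriv (deriv Φ) t * deriv φ t
    with hg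
  set I : ℝ → ℝ := fun t =>
    (Φ t * deriv (deriv f) (φ t) + F₁₃ t) * (deriv φ t) ^ 2 + F₂₃ t * deriv φ t with hI
  have hgd : ∀ t, HasDerivAt g (I t) t := by
    intro t
    have := ((hdΦ' t).mul (hdφ'' t)).sub ((hdΦ'' t).mul (hdφ' t))
    refine HasDerivAt.congr_deriv this ?_
    simp only [hI, h2φ, h2Φ]
    ring
  have hIc : Continuous I := by
    apply Continuous.add
    · exact ((hΦd.continuous.mul (hf2c.comp hφd.continuous)).add h13).mul
        (hφ1d.continuous.pow 2)
    · exact h23.mul hφ1d.continuous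
  -- periodicity of g
  have hdφper : ∀ t, deriv φ (t + T) = deriv φ t := by
    intro t
    have h1 : HasDerivAt (fun s => φ (s + T)) (deriv φ (t + T) * 1) t :=
      (hdφ (t + T)).comp t ((hasDerivAt_id t).add_const T)
    have h2 : (fun s => φ (s + T)) = φ := funext hφper
    rw [h2, mul_one] at h1
    exact (h1.deriv).symm ▸ rfl
  have hdΦper : ∀ t, deriv Φ (t + T) = deriv Φ t := by
    intro t
    have h1 : HasDerivAt (fun s => Φ (s + T)) (deriv Φ (t + T) * 1) t :=
      (hdΦ (t + T)).comp t ((hasDerivAt_id t).add_const T)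
    have h2 : (fun s => Φ (s + T)) = Φ := funext hΦper
    rw [h2, mul_one] at h1
    exact (h1.deriv).symm ▸ rfl
  have hgper : g T = g 0 := by
    have e0T : (T : ℝ) = 0 + T := by ring
    simp only [hg, h2φ, h2Φ]
    rw [e0T, hdφper 0, hdΦper 0, hφper 0, hΦper 0, hF3per 0]
  -- integrate
  have hint : (∫ t in (0:ℝ)..T, I t) = g T - g 0 :=
    intervalIntegral.integral_eq_sub_of_hasDerivAt
      (fun t _ => hgd t) (hIc.intervalIntegrable 0 T)
  have hc1 : Continuous fun t => (Φ t * deriv (deriv f) (φ t) + F₁₃ t) * (deriv φ t) ^ 2 :=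
    ((hΦd.continuous.mul (hf2c.comp hφd.continuous)).add h13).mul (hφ1d.continuous.pow 2)
  have hc2 : Continuous fun t => F₂₃ t * deriv φ t := h23.mul hφ1d.continuous
  rw [← intervalIntegral.integral_add (hc1.intervalIntegrable 0 T)
    (hc2.intervalIntegrable 0 T)]
  rw [show (fun t => (Φ t * deriv (deriv f) (φ t) + F₁₃ t) * (deriv φ t) ^ 2
      + F₂₃ t * deriv φ t) = I from rfl] at *
  rw [hint, hgper, sub_self]
end
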